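/- arXiv:1012.5918 — 2 statements merged into one kernel-verified Lean document; each statement's English description precedes it below -/
import Mathlib

section
/- Let A, B, C be affinely independent points in the Euclidean plane ℝ² with side lengths a = dist(B,C), b = dist(C,A), c = dist(A,B), and let h > 0. Define G : ℝ² → ℝ by G(D) = a·√(d(D, ℓ_{BC})² + h²) + b·√(d(D, ℓ_{CA})² + h²) + c·√(d(D, ℓ_{AB})² + h²), where d(D, ℓ) denotes the Euclidean distance from D to the line ℓ through the indicated pair of vertices. Then G attains its global minimum over ℝ² exactly at the incenter of the triangle ABC; in particular, the minimizer is unique, lies in the interior of the triangle, and its three distances to the side lines are all equal to the inradius r = 2S/(a+b+c), where S is the area of the triangle. -/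
/-- The line in the Euclidean plane through two points, as a set. -/
noncomputable def sideLine (X Y : EuclideanSpace ℝ (Fin 2)) : Set (EuclideanSpace ℝ (Fin 2)) :=
  (affineSpan ℝ {X, Y} : AffineSubspace ℝ (EuclideanSpace ℝ (Fin 2)))

/-- The incenter of the triangle `ABC`, given by its barycentric coordinates
`(a : b : c)` where `a, b, c` are the side lengths. -/
noncomputable def triIncenter (A B C : EuclideanSpace ℝ (Fin 2)) : EuclideanSpace ℝ (Fin 2) :=
  (dist B C + dist C A + dist A B)⁻¹ •
    (dist B C • A + dist C A • B + dist A B • C)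

/-- The area of the triangle `ABC` (the Lebesgue measure of its convex hull). -/
noncomputable def triArea (A B C : EuclideanSpace ℝ (Fin 2)) : ℝ :=
  (MeasureTheory.volume (convexHull ℝ ({A, B, C} : Set (EuclideanSpace ℝ (Fin 2))))).toReal

open Metric Set MeasureTheory Pointwise

namespace TriAux


abbrev E2 := EuclideanSpace ℝ (Fin 2)

/-- 2×2 determinant of two planar vectors. -/
def det2 (u v : E2) : ℝ := u 0 * v 1 - u 1 * v 0

lemma ext2 {x y : E2} (h0 : x 0 = y 0) (h1 : x 1 = y 1) : x = y := by
  ext i; fin_cases i <;> assumption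

lemma norm_eq2 (w : E2) : ‖w‖ = Real.sqrt (w 0 ^ 2 + w 1 ^ 2) := by
  rw [EuclideanSpace.norm_eq, Fin.sum_univ_two]
  simp [Real.norm_eq_abs, sq_abs]

lemma sq_add_sq_pos {v : E2} (hv : v ≠ 0) : 0 < v 0 ^ 2 + v 1 ^ 2 := by
  rcases lt_or_eq_of_le (by positivity : (0:ℝ) ≤ v 0 ^ 2 + v 1 ^ 2) with h | h
  · exact h
  · exfalso
    have h0 : v 0 = 0 := by nlinarith [sq_nonneg (v 0), sq_nonneg (v 1)]
    have h1 : v 1 = 0 := by nlinarith [sq_nonneg (v 0), sq_nonneg (v 1)]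
    exact hv (ext2 (by rw [h0]; rfl) (by rw [h1]; rfl))

lemma abs_det2_le (u v : E2) : |det2 u v| ≤ ‖u‖ * ‖v‖ := by
  rw [norm_eq2, norm_eq2, ← Real.sqrt_mul (by positivity)]
  rw [← Real.sqrt_sq_eq_abs]
  apply Real.sqrt_le_sqrt
  unfold det2
  nlinarith [sq_nonneg (u 0 * v 0 + u 1 * v 1)]

lemma foot_sq (w0 w1 v0 v1 : ℝ) (hv : 0 < v0^2+v1^2) :
    (w0 - ((w0*v0+w1*v1)/(v0^2+v1^2))*v0)^2 + (w1 - ((w0*v0+w1*v1)/(v0^2+v1^2))*v1)^2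
      = (v0*w1 - v1*w0)^2/(v0^2+v1^2) := by
  field_simp
  ring

lemma mem_sideLine_iff {X Y p : E2} : p ∈ sideLine X Y ↔ ∃ t : ℝ, p = t • (Y - X) + X := by
  constructor
  · intro hp
    have : (p - X) +ᵥ X ∈ line[ℝ, X, Y] := by simpa [vsub_vadd, sideLine] using hp
    rw [vadd_left_mem_affineSpan_pair] at this
    obtain ⟨r, hr⟩ := this
    have hr' : p - X = r • (Y - X) := hr.symm
    exact ⟨r, by rw [sub_eq_iff_eq_add] at hr'; exact hr'⟩
  · rintro ⟨t, rfl⟩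
    have := smul_vsub_vadd_mem_affineSpan_pair (k := ℝ) t X Y
    simpa [sideLine] using this

/-- The distance from a point to the line through `X` and `Y`. -/
lemma infDist_sideLine (X Y D : E2) (hXY : X ≠ Y) :
    Metric.infDist D (sideLine X Y) = |det2 (Y - X) (D - X)| / dist X Y := by
  have hvne : Y - X ≠ 0 := sub_ne_zero.2 (Ne.symm hXY)
  have hvv : 0 < (Y - X) 0 ^ 2 + (Y - X) 1 ^ 2 := sq_add_sq_pos hvne
  have hnv : 0 < ‖Y - X‖ := norm_pos_iff.2 hvne
  have hdist : dist X Y = ‖Y - X‖ := by rw [dist_eq_norm, norm_sub_rev]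
  rw [hdist]
  have hne : (sideLine X Y).Nonempty := ⟨X, mem_sideLine_iff.2 ⟨0, by simp⟩⟩
  apply le_antisymm
  · set t₀ : ℝ := ((D - X) 0 * (Y - X) 0 + (D - X) 1 * (Y - X) 1) /
      ((Y - X) 0 ^ 2 + (Y - X) 1 ^ 2) with ht₀
    have hmem : t₀ • (Y - X) + X ∈ sideLine X Y := mem_sideLine_iff.2 ⟨t₀, rfl⟩
    refine le_trans (Metric.infDist_le_dist_of_mem hmem) (le_of_eq ?_)
    have h1 : dist D (t₀ • (Y - X) + X) = ‖(D - X) - t₀ • (Y - X)‖ := by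
      rw [dist_eq_norm]; congr 1; abel
    rw [h1, norm_eq2]
    have hs : ((D - X) - t₀ • (Y - X)) 0 ^ 2 + ((D - X) - t₀ • (Y - X)) 1 ^ 2 =
        (det2 (Y - X) (D - X)) ^ 2 / ((Y - X) 0 ^ 2 + (Y - X) 1 ^ 2) := by
      have := foot_sq ((D - X) 0) ((D - X) 1) ((Y - X) 0) ((Y - X) 1) hvv
      simp only [PiLp.sub_apply, PiLp.smul_apply, smul_eq_mul, ht₀, det2]
      simp only [PiLp.sub_apply] at this
      convert this using 2 <;> ring
    rw [hs, Real.sqrt_div (sq_nonneg _), Real.sqrt_sq_eq_abs, norm_eq2]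
  · refine le_of_not_gt fun hlt => ?_
    obtain ⟨p, hp, hdp⟩ := (Metric.infDist_lt_iff hne).1 hlt
    obtain ⟨t, rfl⟩ := mem_sideLine_iff.1 hp
    have h1 : dist D (t • (Y - X) + X) = ‖(D - X) - t • (Y - X)‖ := by
      rw [dist_eq_norm]; congr 1; abel
    have h2 : det2 (Y - X) ((D - X) - t • (Y - X)) = det2 (Y - X) (D - X) := by
      simp only [det2, PiLp.sub_apply, PiLp.smul_apply, smul_eq_mul]; ring
    have h3 := abs_det2_le (Y - X) ((D - X) - t • (Y - X))
    rw [h2] at h3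
    rw [h1] at hdp
    rw [lt_div_iff₀ hnv] at hdp
    nlinarith [norm_nonneg ((D - X) - t • (Y - X))]


lemma mem_line_iff {V : Type*} [AddCommGroup V] [Module ℝ V] {q1 q2 p : V} :
    p ∈ line[ℝ, q1, q2] ↔ ∃ t : ℝ, p = t • (q2 - q1) + q1 := by
  constructor
  · intro hp
    have : (p - q1) +ᵥ q1 ∈ line[ℝ, q1, q2] := by simpa [vsub_vadd] using hp
    rw [vadd_left_mem_affineSpan_pair] at this
    obtain ⟨r, hr⟩ := this
    have hr' : p - q1 = r • (q2 - q1) := hr.symm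
    exact ⟨r, by rw [sub_eq_iff_eq_add] at hr'; exact hr'⟩
  · rintro ⟨t, rfl⟩
    have := smul_vsub_vadd_mem_affineSpan_pair (k := ℝ) t q1 q2
    simpa using this

/-- the closed standard triangle in the plane `ℝ × ℝ` -/
def T2 : Set (ℝ × ℝ) := {p | 0 ≤ p.1 ∧ 0 ≤ p.2 ∧ p.1 + p.2 ≤ 1}

lemma volume_T2 : volume T2 = ENNReal.ofReal (1/2) := by
  set R : Set (ℝ × ℝ) := regionBetween (fun _ => (0:ℝ)) (fun x => 1 - x) (Ioo 0 1) with hRdef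
  have hint : ∫ y in Ioo (0:ℝ) 1, ((fun x : ℝ => (1:ℝ) - x) - fun _ : ℝ => (0:ℝ)) y = 1/2 := by
    have : ∀ y : ℝ, ((fun x : ℝ => (1:ℝ) - x) - fun _ : ℝ => (0:ℝ)) y = 1 - y := by
      intro y; simp
    rw [MeasureTheory.integral_congr_ae (Filter.Eventually.of_forall this)]
    rw [← MeasureTheory.integral_Ioc_eq_integral_Ioo,
      ← intervalIntegral.integral_of_le (by norm_num : (0:ℝ) ≤ 1)]
    rw [intervalIntegral.integral_sub intervalIntegrable_const
      intervalIntegral.intervalIntegrable_id]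
    simp [integral_id]
    norm_num
  have hgint : IntegrableOn (fun x => (1:ℝ) - x) (Ioo 0 1) :=
    ((continuous_const.sub continuous_id).integrableOn_Icc).mono_set Ioo_subset_Icc_self
  have hR : volume R = ENNReal.ofReal (1/2) := by
    rw [hRdef, Measure.volume_eq_prod ℝ ℝ,
      volume_regionBetween_eq_integral (integrableOn_const measure_Ioo_lt_top.ne) hgint
        measurableSet_Ioo (fun x hx => by simp at hx ⊢; linarith [hx.2]), hint]
  have hnull : ∀ (q1 q2 w : ℝ × ℝ), (∀ t : ℝ, w ≠ t • (q2 - q1) + q1) →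
      volume (line[ℝ, q1, q2] : Set (ℝ × ℝ)) = 0 := by
    intro q1 q2 w hw
    refine Measure.addHaar_affineSubspace volume _ fun h => ?_
    have : w ∈ line[ℝ, q1, q2] := h ▸ AffineSubspace.mem_top ℝ _ w
    obtain ⟨t, ht⟩ := mem_line_iff.1 this
    exact hw t ht
  have hl1 : volume (line[ℝ, ((0:ℝ),(0:ℝ)), ((0:ℝ),(1:ℝ))] : Set (ℝ × ℝ)) = 0 := by
    refine hnull _ _ ((1:ℝ),(0:ℝ)) fun t h => ?_
    have := congrArg Prod.fst h; simp at this
  have hl2 : volume (line[ℝ, ((0:ℝ),(0:ℝ)), ((1:ℝ),(0:ℝ))] : Set (ℝ × ℝ)) = 0 := by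
    refine hnull _ _ ((0:ℝ),(1:ℝ)) fun t h => ?_
    have := congrArg Prod.snd h; simp at this
  have hl3 : volume (line[ℝ, ((1:ℝ),(0:ℝ)), ((0:ℝ),(1:ℝ))] : Set (ℝ × ℝ)) = 0 := by
    refine hnull _ _ ((0:ℝ),(0:ℝ)) fun t h => ?_
    have h1 := congrArg Prod.fst h; have h2 := congrArg Prod.snd h
    simp at h1 h2; linarith
  have hsubR : R ⊆ T2 := by
    intro p hp
    simp only [hRdef, regionBetween, mem_setOf_eq, mem_Ioo] at hp
    exact ⟨le_of_lt hp.1.1, le_of_lt hp.2.1, by linarith [hp.2.2]⟩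
  have hcover : T2 ⊆ R ∪ (line[ℝ, ((0:ℝ),(0:ℝ)), ((0:ℝ),(1:ℝ))] : Set (ℝ × ℝ))
      ∪ (line[ℝ, ((0:ℝ),(0:ℝ)), ((1:ℝ),(0:ℝ))] : Set (ℝ × ℝ))
      ∪ (line[ℝ, ((1:ℝ),(0:ℝ)), ((0:ℝ),(1:ℝ))] : Set (ℝ × ℝ)) := by
    rintro p ⟨h1, h2, h3⟩
    by_cases e1 : p.1 = 0
    · refine Or.inl (Or.inl (Or.inr (mem_line_iff.2 ⟨p.2, ?_⟩)))
      refine Prod.ext ?_ ?_ <;> simp [e1]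
    by_cases e2 : p.2 = 0
    · refine Or.inl (Or.inr (mem_line_iff.2 ⟨p.1, ?_⟩))
      refine Prod.ext ?_ ?_ <;> simp [e2]
    by_cases e3 : p.1 + p.2 = 1
    · refine Or.inr (mem_line_iff.2 ⟨p.2, ?_⟩)
      refine Prod.ext ?_ ?_ <;> simp <;> linarith
    · refine Or.inl (Or.inl (Or.inl ?_))
      simp only [hRdef, regionBetween, mem_setOf_eq, mem_Ioo]
      have hp1 : 0 < p.1 := lt_of_le_of_ne h1 (Ne.symm e1)
      have hp2 : 0 < p.2 := lt_of_le_of_ne h2 (Ne.symm e2)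
      have hs : p.1 + p.2 < 1 := lt_of_le_of_ne h3 e3
      exact ⟨⟨hp1, by linarith⟩, hp2, by linarith⟩
  refine le_antisymm ?_ (hR ▸ measure_mono hsubR)
  calc volume T2 ≤ volume (R ∪ _ ∪ _ ∪ _) := measure_mono hcover
    _ ≤ volume (R ∪ _ ∪ _) + volume _ := measure_union_le _ _
    _ ≤ volume (R ∪ _) + volume _ + volume _ := by gcongr; exact measure_union_le _ _
    _ ≤ volume R + volume _ + volume _ + volume _ := by gcongr; exact measure_union_le _ _
    _ = ENNReal.ofReal (1/2) := by rw [hR, hl1, hl2, hl3]; simp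

/-- the closed standard triangle in `E2` -/
def Tst : Set E2 := {x | 0 ≤ x 0 ∧ 0 ≤ x 1 ∧ x 0 + x 1 ≤ 1}

lemma measurableSet_T2 : MeasurableSet T2 := by
  have hT : T2 = {p : ℝ × ℝ | 0 ≤ p.1} ∩ ({p : ℝ × ℝ | 0 ≤ p.2} ∩ {p : ℝ × ℝ | p.1 + p.2 ≤ 1}) := rfl
  rw [hT]
  exact (measurableSet_le measurable_const measurable_fst).inter
    ((measurableSet_le measurable_const measurable_snd).inter
      (measurableSet_le (measurable_fst.add measurable_snd) measurable_const))

lemma volume_Tst : volume Tst = ENNReal.ofReal (1/2) := by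
  have hmp : MeasurePreserving
      ((MeasurableEquiv.finTwoArrow : (Fin 2 → ℝ) ≃ᵐ ℝ × ℝ) ∘ (MeasurableEquiv.toLp 2 (Fin 2 → ℝ)).symm)
      volume volume :=
    (volume_preserving_finTwoArrow ℝ).comp (EuclideanSpace.volume_preserving_symm_measurableEquiv_toLp (Fin 2))
  have hTpre : Tst =
      ((MeasurableEquiv.finTwoArrow : (Fin 2 → ℝ) ≃ᵐ ℝ × ℝ) ∘ (MeasurableEquiv.toLp 2 (Fin 2 → ℝ)).symm) ⁻¹' T2 := rfl
  rw [hTpre, hmp.measure_preimage measurableSet_T2.nullMeasurableSet, volume_T2]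

noncomputable def u0 : E2 := EuclideanSpace.single 0 1
noncomputable def u1 : E2 := EuclideanSpace.single 1 1

lemma Tst_eq_hull : Tst = convexHull ℝ ({0, u0, u1} : Set E2) := by
  apply Subset.antisymm
  · intro x hx
    obtain ⟨h0, h1, hs⟩ := hx
    have hcm := Finset.centerMass_mem_convexHull (Finset.univ : Finset (Fin 3))
      (w := ![1 - x 0 - x 1, x 0, x 1])
      (fun i _ => by fin_cases i <;> simp <;> linarith)
      (by simp [Fin.sum_univ_three]; linarith)
      (s := ({0, u0, u1} : Set E2)) (z := ![0, u0, u1]) (fun i _ => by fin_cases i <;> simp)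
    have hx' : (Finset.univ : Finset (Fin 3)).centerMass ![1 - x 0 - x 1, x 0, x 1] ![0, u0, u1] = x := by
      rw [Finset.centerMass]
      rw [Fin.sum_univ_three, Fin.sum_univ_three]
      simp only [Matrix.cons_val_zero, Matrix.cons_val_one, Matrix.head_cons, Matrix.cons_val_two, Matrix.tail_cons]
      rw [show (1 - x 0 - x 1) + x 0 + x 1 = 1 by ring]
      rw [inv_one, one_smul, smul_zero, zero_add]
      apply ext2 <;>
        simp [u0, u1, EuclideanSpace.single_apply, PiLp.add_apply, PiLp.smul_apply]
    rwa [hx'] at hcm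
  · refine convexHull_min ?_ ?_
    · intro p hp
      simp only [mem_insert_iff, mem_singleton_iff] at hp
      rcases hp with rfl | rfl | rfl <;>
        refine ⟨?_, ?_, ?_⟩ <;>
        simp [Tst, u0, u1, EuclideanSpace.single_apply]
    · intro x hx y hy s t hs ht hst
      refine ⟨?_, ?_, ?_⟩ <;>
        simp only [PiLp.add_apply, PiLp.smul_apply, smul_eq_mul] <;>
        nlinarith [hx.1, hx.2.1, hx.2.2, hy.1, hy.2.1, hy.2.2]

noncomputable def Lmap (P Q : E2) : E2 →ₗ[ℝ] E2 where
  toFun x := x 0 • P + x 1 • Q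
  map_add' x y := by simp only [PiLp.add_apply, add_smul]; abel
  map_smul' c x := by
    simp only [PiLp.smul_apply, smul_eq_mul, RingHom.id_apply, mul_smul, smul_add]

lemma Lmap_det (P Q : E2) : LinearMap.det (Lmap P Q) = det2 P Q := by
  rw [← LinearMap.det_toMatrix (EuclideanSpace.basisFun (Fin 2) ℝ).toBasis, Matrix.det_fin_two]
  simp [LinearMap.toMatrix_apply, Lmap, det2, EuclideanSpace.single_apply,
    EuclideanSpace.basisFun_apply, OrthonormalBasis.coe_toBasis,
    OrthonormalBasis.coe_toBasis_repr_apply, EuclideanSpace.basisFun_repr]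
  ring

noncomputable def gaff (A P Q : E2) : E2 →ᵃ[ℝ] E2 where
  toFun x := Lmap P Q x + A
  linear := Lmap P Q
  map_vadd' p v := by simp only [vadd_eq_add, map_add]; abel

lemma volume_triangle (A B C : E2) :
    (volume (convexHull ℝ ({A, B, C} : Set E2))).toReal = |det2 (B - A) (C - A)| / 2 := by
  have himg : convexHull ℝ ({A, B, C} : Set E2)
      = ⇑(gaff A (B - A) (C - A)) '' (convexHull ℝ ({0, u0, u1} : Set E2)) := by
    rw [AffineMap.image_convexHull]
    congr 1
    rw [image_insert_eq, image_insert_eq, image_singleton]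
    have h0 : gaff A (B - A) (C - A) 0 = A := by
      simp [gaff, Lmap]
    have hB : gaff A (B - A) (C - A) u0 = B := by
      simp [gaff, Lmap, u0, EuclideanSpace.single_apply]
    have hC : gaff A (B - A) (C - A) u1 = C := by
      simp [gaff, Lmap, u1, EuclideanSpace.single_apply]
    rw [h0, hB, hC]
  rw [himg, ← Tst_eq_hull]
  have h2 : ⇑(gaff A (B - A) (C - A)) '' Tst = A +ᵥ (⇑(Lmap (B - A) (C - A)) '' Tst) := by
    rw [← Set.image_vadd, ← Set.image_comp]
    refine Set.image_congr fun x _ => ?_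
    show Lmap (B - A) (C - A) x + A = A +ᵥ Lmap (B - A) (C - A) x
    rw [vadd_eq_add, add_comm]
  rw [h2, measure_vadd, Measure.addHaar_image_linearMap, Lmap_det, volume_Tst]
  rw [← ENNReal.ofReal_mul (abs_nonneg _), ENNReal.toReal_ofReal (by positivity)]
  ring

lemma tangent_ge {r h : ℝ} (hr : 0 < r) (hh : 0 < h) {d : ℝ} (hd : 0 ≤ d) :
    d * r + h^2 ≤ Real.sqrt (r^2+h^2) * Real.sqrt (d^2+h^2) := by
  have h1 : Real.sqrt (r^2+h^2) ^ 2 = r^2+h^2 := Real.sq_sqrt (by positivity)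
  have h2 : Real.sqrt (d^2+h^2) ^ 2 = d^2+h^2 := Real.sq_sqrt (by positivity)
  have h3 := Real.sqrt_nonneg (r^2+h^2)
  have h4 := Real.sqrt_nonneg (d^2+h^2)
  have hXY : (Real.sqrt (r^2+h^2) * Real.sqrt (d^2+h^2))^2 = (r^2+h^2)*(d^2+h^2) := by
    rw [mul_pow, h1, h2]
  nlinarith [sq_nonneg (d - r), mul_nonneg h3 h4, sq_nonneg h,
    mul_nonneg (mul_nonneg hd hr.le) hh.le]

lemma tangent_eq {r h : ℝ} (hr : 0 < r) (hh : 0 < h) {d : ℝ} (hd : 0 ≤ d)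
    (he : Real.sqrt (r^2+h^2) * Real.sqrt (d^2+h^2) = d * r + h^2) : d = r := by
  have h1 : Real.sqrt (r^2+h^2) ^ 2 = r^2+h^2 := Real.sq_sqrt (by positivity)
  have h2 : Real.sqrt (d^2+h^2) ^ 2 = d^2+h^2 := Real.sq_sqrt (by positivity)
  have hXY : (Real.sqrt (r^2+h^2) * Real.sqrt (d^2+h^2))^2 = (r^2+h^2)*(d^2+h^2) := by
    rw [mul_pow, h1, h2]
  have hz : (d - r)^2 * h^2 = 0 := by nlinarith
  have : (d - r)^2 = 0 := by
    rcases mul_eq_zero.1 hz with h' | h'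
    · exact h'
    · exact absurd h' (by positivity)
  have := pow_eq_zero_iff (n := 2) (by norm_num) |>.1 this
  linarith [sub_eq_zero.1 this]

lemma range_triple (A B C : E2) : Set.range ![A,B,C] = {A,B,C} := by
  ext p
  constructor
  · rintro ⟨i, rfl⟩; fin_cases i <;> simp
  · intro hp
    simp only [Set.mem_insert_iff, Set.mem_singleton_iff] at hp
    rcases hp with rfl | rfl | rfl
    exacts [⟨0, by simp⟩, ⟨1, by simp⟩, ⟨2, by simp⟩]

lemma det2_ne_zero_of_affineIndependent {A B C : E2} (h : AffineIndependent ℝ ![A,B,C]) :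
    det2 (B - A) (C - A) ≠ 0 := by
  intro hd
  rw [affineIndependent_iff_not_collinear] at h
  apply h
  rw [range_triple]
  simp only [det2, PiLp.sub_apply] at hd
  rw [collinear_iff_of_mem (Set.mem_insert A {B, C})]
  by_cases hBA : B - A = 0
  · refine ⟨C - A, fun p hp => ?_⟩
    have hBA' : B = A := by rwa [sub_eq_zero] at hBA
    simp only [Set.mem_insert_iff, Set.mem_singleton_iff] at hp
    rcases hp with rfl | rfl | rfl
    · exact ⟨0, by simp⟩
    · exact ⟨0, by simp [hBA']⟩
    · refine ⟨1, ?_⟩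
      apply ext2 <;>
        simp only [PiLp.add_apply, PiLp.smul_apply, PiLp.sub_apply, smul_eq_mul,
          vadd_eq_add, one_mul] <;> ring
  · refine ⟨B - A, fun p hp => ?_⟩
    simp only [Set.mem_insert_iff, Set.mem_singleton_iff] at hp
    rcases hp with rfl | rfl | rfl
    · exact ⟨0, by simp⟩
    · refine ⟨1, ?_⟩
      apply ext2 <;>
        simp only [PiLp.add_apply, PiLp.smul_apply, PiLp.sub_apply, smul_eq_mul,
          vadd_eq_add, one_mul] <;> ring
    · by_cases h0 : B 0 - A 0 = 0
      · have h1 : B 1 - A 1 ≠ 0 := by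
          intro h1
          exact hBA (ext2 (by simpa using h0) (by simpa using h1))
        have hp0 : p 0 - A 0 = 0 := by
          rcases mul_eq_zero.1 (show (B 1 - A 1) * (p 0 - A 0) = 0 by
            linear_combination -hd + (p 1 - A 1) * h0) with h' | h'
          · exact absurd h' h1
          · exact h'
        refine ⟨(p 1 - A 1)/(B 1 - A 1), ?_⟩
        apply ext2 <;>
          simp only [PiLp.add_apply, PiLp.smul_apply, PiLp.sub_apply, smul_eq_mul,
            vadd_eq_add]
        · linear_combination hp0 - (p 1 - A 1)/(B 1 - A 1) * h0
        · field_simp; ring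
      · refine ⟨(p 0 - A 0)/(B 0 - A 0), ?_⟩
        apply ext2 <;>
          simp only [PiLp.add_apply, PiLp.smul_apply, PiLp.sub_apply, smul_eq_mul,
            vadd_eq_add] <;> field_simp
        · ring
        · linear_combination hd

end TriAux

set_option maxHeartbeats 4000000 in
/-- For a triangle `ABC` and height `h > 0`, the function
`G(D) = a √(d(D, ℓ_BC)² + h²) + b √(d(D, ℓ_CA)² + h²) + c √(d(D, ℓ_AB)² + h²)`
attains its global minimum over the plane exactly at the incenter; the minimizer is
unique, lies in the interior of the triangle, and its distances to the three side
lines all equal the inradius `r = 2S/(a+b+c)`. -/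
theorem stmt_0 (A B C : EuclideanSpace ℝ (Fin 2))
    (hABC : AffineIndependent ℝ ![A, B, C]) (h : ℝ) (hh : 0 < h)
    (a b c : ℝ) (ha : a = dist B C) (hb : b = dist C A) (hc : c = dist A B)
    (G : EuclideanSpace ℝ (Fin 2) → ℝ)
    (hG : ∀ D, G D =
      a * Real.sqrt (Metric.infDist D (sideLine B C) ^ 2 + h ^ 2) +
      b * Real.sqrt (Metric.infDist D (sideLine C A) ^ 2 + h ^ 2) +
      c * Real.sqrt (Metric.infDist D (sideLine A B) ^ 2 + h ^ 2))
    (S r : ℝ) (hS : S = triArea A B C) (hr : r = 2 * S / (a + b + c)) :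
    (∀ D, G (triIncenter A B C) ≤ G D) ∧
    (∀ D, G D = G (triIncenter A B C) → D = triIncenter A B C) ∧
    triIncenter A B C ∈
      interior (convexHull ℝ ({A, B, C} : Set (EuclideanSpace ℝ (Fin 2)))) ∧
    Metric.infDist (triIncenter A B C) (sideLine B C) = r ∧
    Metric.infDist (triIncenter A B C) (sideLine C A) = r ∧
    Metric.infDist (triIncenter A B C) (sideLine A B) = r := by
  classical
  have hinj := hABC.injective
  have hAB' : A ≠ B := fun e => by
    have : (0 : Fin 3) = 1 := hinj (show ![A,B,C] 0 = ![A,B,C] 1 by simp [e])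
    simp at this
  have hBC' : B ≠ C := fun e => by
    have : (1 : Fin 3) = 2 := hinj (show ![A,B,C] 1 = ![A,B,C] 2 by simp [e])
    simp at this
  have hCA' : C ≠ A := fun e => by
    have : (2 : Fin 3) = 0 := hinj (show ![A,B,C] 2 = ![A,B,C] 0 by simp [e])
    simp at this
  have hapos : 0 < a := ha ▸ dist_pos.2 hBC'
  have hbpos : 0 < b := hb ▸ dist_pos.2 hCA'
  have hcpos : 0 < c := hc ▸ dist_pos.2 hAB'
  have hspos : 0 < a + b + c := by linarith
  have hs0 : a + b + c ≠ 0 := ne_of_gt hspos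
  set Δ : ℝ := TriAux.det2 (B - A) (C - A) with hΔdef
  have hΔ : Δ ≠ 0 := TriAux.det2_ne_zero_of_affineIndependent hABC
  have habs : 0 < |Δ| := abs_pos.2 hΔ
  have hSval : S = |Δ| / 2 := by rw [hS, triArea]; exact TriAux.volume_triangle A B C
  have hrval : r = |Δ| / (a + b + c) := by rw [hr, hSval]; ring
  have hrpos : 0 < r := by rw [hrval]; positivity
  have habs_eq : |Δ| = (a + b + c) * r := by rw [hrval]; field_simp
  set I := triIncenter A B C with hIdef
  -- distance formulas
  have hd1 : ∀ D : EuclideanSpace ℝ (Fin 2), Metric.infDist D (sideLine B C)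
      = |TriAux.det2 (C - B) (D - B)| / a := fun D => by
    rw [TriAux.infDist_sideLine B C D hBC', ← ha]
  have hd2 : ∀ D : EuclideanSpace ℝ (Fin 2), Metric.infDist D (sideLine C A)
      = |TriAux.det2 (A - C) (D - C)| / b := fun D => by
    rw [TriAux.infDist_sideLine C A D hCA', ← hb]
  have hd3 : ∀ D : EuclideanSpace ℝ (Fin 2), Metric.infDist D (sideLine A B)
      = |TriAux.det2 (B - A) (D - A)| / c := fun D => by
    rw [TriAux.infDist_sideLine A B D hAB', ← hc]
  have hesum : ∀ D : EuclideanSpace ℝ (Fin 2),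
      TriAux.det2 (C - B) (D - B) + TriAux.det2 (A - C) (D - C)
        + TriAux.det2 (B - A) (D - A) = Δ := fun D => by
    simp only [hΔdef, TriAux.det2, PiLp.sub_apply]; ring
  -- e-values at the incenter
  have he1I : TriAux.det2 (C - B) (I - B) = a * Δ / (a + b + c) := by
    rw [hIdef, triIncenter, ← ha, ← hb, ← hc, hΔdef]
    simp only [TriAux.det2, PiLp.sub_apply, PiLp.smul_apply, PiLp.add_apply, smul_eq_mul]
    field_simp
    ring
  have he2I : TriAux.det2 (A - C) (I - C) = b * Δ / (a + b + c) := by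
    rw [hIdef, triIncenter, ← ha, ← hb, ← hc, hΔdef]
    simp only [TriAux.det2, PiLp.sub_apply, PiLp.smul_apply, PiLp.add_apply, smul_eq_mul]
    field_simp
    ring
  have he3I : TriAux.det2 (B - A) (I - A) = c * Δ / (a + b + c) := by
    rw [hIdef, triIncenter, ← ha, ← hb, ← hc, hΔdef]
    simp only [TriAux.det2, PiLp.sub_apply, PiLp.smul_apply, PiLp.add_apply, smul_eq_mul]
    field_simp
    ring
  have hd1I : Metric.infDist I (sideLine B C) = r := by
    rw [hd1 I, he1I, abs_div, abs_mul, abs_of_pos hapos, abs_of_pos hspos, habs_eq]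
    field_simp
  have hd2I : Metric.infDist I (sideLine C A) = r := by
    rw [hd2 I, he2I, abs_div, abs_mul, abs_of_pos hbpos, abs_of_pos hspos, habs_eq]
    field_simp
  have hd3I : Metric.infDist I (sideLine A B) = r := by
    rw [hd3 I, he3I, abs_div, abs_mul, abs_of_pos hcpos, abs_of_pos hspos, habs_eq]
    field_simp
  have hGI : G I = (a + b + c) * Real.sqrt (r^2 + h^2) := by
    rw [hG I, hd1I, hd2I, hd3I]; ring
  set K : ℝ := Real.sqrt (r^2 + h^2) with hKdef
  have hK1 : K^2 = r^2 + h^2 := Real.sq_sqrt (by positivity)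
  have hKpos : 0 < K := Real.sqrt_pos.2 (by positivity)
  -- the main pointwise estimate
  have hforall : ∀ D : EuclideanSpace ℝ (Fin 2), G I ≤ G D ∧ (G D ≤ G I → D = I) := by
    intro D
    set m1 := |TriAux.det2 (C - B) (D - B)| with hm1def
    set m2 := |TriAux.det2 (A - C) (D - C)| with hm2def
    set m3 := |TriAux.det2 (B - A) (D - A)| with hm3def
    have hm1 : 0 ≤ m1 := abs_nonneg _
    have hm2 : 0 ≤ m2 := abs_nonneg _
    have hm3 : 0 ≤ m3 := abs_nonneg _
    have hGD : G D = a * Real.sqrt ((m1/a)^2 + h^2) + b * Real.sqrt ((m2/b)^2 + h^2)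
        + c * Real.sqrt ((m3/c)^2 + h^2) := by
      rw [hG D, hd1 D, hd2 D, hd3 D]
    set s1 := Real.sqrt ((m1/a)^2 + h^2) with hs1def
    set s2 := Real.sqrt ((m2/b)^2 + h^2) with hs2def
    set s3 := Real.sqrt ((m3/c)^2 + h^2) with hs3def
    have ht1 : (m1/a) * r + h^2 ≤ K * s1 :=
      TriAux.tangent_ge hrpos hh (div_nonneg hm1 hapos.le)
    have ht2 : (m2/b) * r + h^2 ≤ K * s2 :=
      TriAux.tangent_ge hrpos hh (div_nonneg hm2 hbpos.le)
    have ht3 : (m3/c) * r + h^2 ≤ K * s3 :=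
      TriAux.tangent_ge hrpos hh (div_nonneg hm3 hcpos.le)
    have ht1' : m1 * r + a * h^2 ≤ a * (K * s1) := by
      have := mul_le_mul_of_nonneg_left ht1 hapos.le
      calc m1 * r + a * h^2 = a * ((m1/a) * r + h^2) := by field_simp
        _ ≤ a * (K * s1) := this
    have ht2' : m2 * r + b * h^2 ≤ b * (K * s2) := by
      have := mul_le_mul_of_nonneg_left ht2 hbpos.le
      calc m2 * r + b * h^2 = b * ((m2/b) * r + h^2) := by field_simp
        _ ≤ b * (K * s2) := this
    have ht3' : m3 * r + c * h^2 ≤ c * (K * s3) := by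
      have := mul_le_mul_of_nonneg_left ht3 hcpos.le
      calc m3 * r + c * h^2 = c * ((m3/c) * r + h^2) := by field_simp
        _ ≤ c * (K * s3) := this
    have hβ : (a + b + c) * r ≤ m1 + m2 + m3 := by
      rw [← habs_eq, ← hesum D]
      calc |TriAux.det2 (C - B) (D - B) + TriAux.det2 (A - C) (D - C)
            + TriAux.det2 (B - A) (D - A)|
          ≤ |TriAux.det2 (C - B) (D - B) + TriAux.det2 (A - C) (D - C)|
            + |TriAux.det2 (B - A) (D - A)| := abs_add_le _ _
        _ ≤ m1 + m2 + m3 := by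
            have := abs_add_le (TriAux.det2 (C - B) (D - B)) (TriAux.det2 (A - C) (D - C))
            rw [hm1def, hm2def, hm3def]; linarith
    have hβ' : r * ((a + b + c) * r) ≤ r * (m1 + m2 + m3) :=
      mul_le_mul_of_nonneg_left hβ hrpos.le
    have hKK : K * ((a + b + c) * K) = (a+b+c)*r^2 + (a+b+c)*h^2 := by
      linear_combination (a + b + c) * hK1
    have hKle : K * G I ≤ K * G D := by
      rw [hGI, hGD]
      linarith [ht1', ht2', ht3', hβ', hKK]
    refine ⟨(mul_le_mul_iff_right₀ hKpos).1 hKle, fun hle => ?_⟩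
    -- equality analysis
    have hKeq : K * G D ≤ K * G I := mul_le_mul_of_nonneg_left hle hKpos.le
    rw [hGI, hGD] at hKeq
    have hα1 : a * (K * s1) - (m1 * r + a * h^2) = 0 := by
      linarith [ht1', ht2', ht3', hβ', hKK, hKeq]
    have hα2 : b * (K * s2) - (m2 * r + b * h^2) = 0 := by
      linarith [ht1', ht2', ht3', hβ', hKK, hKeq]
    have hα3 : c * (K * s3) - (m3 * r + c * h^2) = 0 := by
      linarith [ht1', ht2', ht3', hβ', hKK, hKeq]
    have hm1r : m1 = a * r := by
      have h' : K * s1 = (m1/a) * r + h^2 := by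
        have : a * (K * s1) = a * ((m1/a) * r + h^2) := by
          field_simp at hα1 ⊢; linarith [hα1]
        exact mul_left_cancel₀ hapos.ne' this
      have := TriAux.tangent_eq hrpos hh (div_nonneg hm1 hapos.le) h'
      field_simp at this; linarith [this]
    have hm2r : m2 = b * r := by
      have h' : K * s2 = (m2/b) * r + h^2 := by
        have : b * (K * s2) = b * ((m2/b) * r + h^2) := by
          field_simp at hα2 ⊢; linarith [hα2]
        exact mul_left_cancel₀ hbpos.ne' this
      have := TriAux.tangent_eq hrpos hh (div_nonneg hm2 hbpos.le) h'
      field_simp at this; linarith [this]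
    have hm3r : m3 = c * r := by
      have h' : K * s3 = (m3/c) * r + h^2 := by
        have : c * (K * s3) = c * ((m3/c) * r + h^2) := by
          field_simp at hα3 ⊢; linarith [hα3]
        exact mul_left_cancel₀ hcpos.ne' this
      have := TriAux.tangent_eq hrpos hh (div_nonneg hm3 hcpos.le) h'
      field_simp at this; linarith [this]
    -- signs
    have hee : TriAux.det2 (C - B) (D - B) = a * Δ / (a + b + c) ∧
        TriAux.det2 (B - A) (D - A) = c * Δ / (a + b + c) := by
      have hsum := hesum D
      have l1 := le_abs_self (TriAux.det2 (C - B) (D - B))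
      have l2 := le_abs_self (TriAux.det2 (A - C) (D - C))
      have l3 := le_abs_self (TriAux.det2 (B - A) (D - A))
      have n1 := neg_abs_le (TriAux.det2 (C - B) (D - B))
      have n2 := neg_abs_le (TriAux.det2 (A - C) (D - C))
      have n3 := neg_abs_le (TriAux.det2 (B - A) (D - A))
      rw [← hm1def] at l1 n1
      rw [← hm2def] at l2 n2
      rw [← hm3def] at l3 n3
      rcases lt_or_gt_of_ne hΔ with hneg | hpos
      · have habsΔ : |Δ| = -Δ := abs_of_neg hneg
        have hΔr : Δ = -((a + b + c) * r) := by rw [← habs_eq, habsΔ]; ring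
        have hq1 : a * Δ / (a + b + c) = -(a * r) := by
          rw [hΔr]; field_simp
        have hq3 : c * Δ / (a + b + c) = -(c * r) := by
          rw [hΔr]; field_simp
        rw [hq1, hq3]
        constructor <;> [skip; skip] <;>
          (rw [hm1r] at n1 l1; rw [hm2r] at n2 l2; rw [hm3r] at n3 l3; linarith [hΔr])
      · have habsΔ : |Δ| = Δ := abs_of_pos hpos
        have hΔr : Δ = (a + b + c) * r := by rw [← habs_eq, habsΔ]
        have hq1 : a * Δ / (a + b + c) = a * r := by
          rw [hΔr]; field_simp
        have hq3 : c * Δ / (a + b + c) = c * r := by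
          rw [hΔr]; field_simp
        rw [hq1, hq3]
        constructor <;> [skip; skip] <;>
          (rw [hm1r] at n1 l1; rw [hm2r] at n2 l2; rw [hm3r] at n3 l3; linarith [hΔr])
    -- conclude D = I
    have heq1 : TriAux.det2 (C - B) (D - B) = TriAux.det2 (C - B) (I - B) := by
      rw [hee.1, he1I]
    have heq3 : TriAux.det2 (B - A) (D - A) = TriAux.det2 (B - A) (I - A) := by
      rw [hee.2, he3I]
    simp only [TriAux.det2, PiLp.sub_apply] at heq1 heq3
    have hΔc : Δ = (B 0 - A 0) * (C 1 - A 1) - (B 1 - A 1) * (C 0 - A 0) := by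
      rw [hΔdef]; simp only [TriAux.det2, PiLp.sub_apply]
    have hw0 : D 0 - I 0 = 0 := by
      have h' : (D 0 - I 0) * Δ = 0 := by
        rw [hΔc]; linear_combination (C 0 - B 0) * heq3 - (B 0 - A 0) * heq1
      rcases mul_eq_zero.1 h' with h'' | h''
      · exact h''
      · exact absurd h'' hΔ
    have hw1 : D 1 - I 1 = 0 := by
      have h' : (D 1 - I 1) * Δ = 0 := by
        rw [hΔc]; linear_combination (C 1 - B 1) * heq3 - (B 1 - A 1) * heq1
      rcases mul_eq_zero.1 h' with h'' | h''
      · exact h''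
      · exact absurd h'' hΔ
    exact TriAux.ext2 (by linarith) (by linarith)
  -- interior membership
  have hspan : affineSpan ℝ (Set.range ![A,B,C]) = ⊤ := by
    rw [hABC.affineSpan_eq_top_iff_card_eq_finrank_add_one]
    simp [finrank_euclideanSpace_fin]
  set bT : AffineBasis (Fin 3) ℝ (EuclideanSpace ℝ (Fin 2)) := ⟨![A,B,C], hABC, hspan⟩
    with hbT
  have hbTcoe : ⇑bT = ![A,B,C] := rfl
  set w : Fin 3 → ℝ := ![a/(a+b+c), b/(a+b+c), c/(a+b+c)] with hwdef
  have hwsum : ∑ i, w i = 1 := by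
    rw [hwdef]
    simp [Fin.sum_univ_three]
    field_simp
  have hIcomb : (Finset.univ.affineCombination ℝ (⇑bT) w) = I := by
    rw [Finset.affineCombination_eq_linear_combination _ _ _ hwsum, hbTcoe]
    rw [Fin.sum_univ_three]
    rw [hIdef, triIncenter, ← ha, ← hb, ← hc, hwdef]
    apply TriAux.ext2 <;>
      simp only [PiLp.add_apply, PiLp.smul_apply, smul_eq_mul,
        Matrix.cons_val_zero, Matrix.cons_val_one, Matrix.head_cons,
        Matrix.cons_val_two, Matrix.tail_cons] <;>
      field_simp <;> ring
  have hmem : I ∈ interior (convexHull ℝ ({A,B,C} : Set (EuclideanSpace ℝ (Fin 2)))) := by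
    have hrng : Set.range (⇑bT) = {A,B,C} := by rw [hbTcoe]; exact TriAux.range_triple A B C
    rw [← hrng, bT.interior_convexHull, Set.mem_setOf_eq]
    intro i
    have hco := bT.coord_apply_combination_of_mem (Finset.mem_univ i) hwsum
    rw [hIcomb] at hco
    rw [hco, hwdef]
    fin_cases i <;> simp <;> positivity
  exact ⟨fun D => (hforall D).1, fun D hD => (hforall D).2 (le_of_eq hD), hmem,
    hd1I, hd2I, hd3I⟩
end

section
/- Let S > 0 and r > 0 be real numbers. The function h ↦ (S·(1 + √(1 + (h/r)²)))³ / ((S·h/3)²) on (0, ∞) attains its global minimum uniquely at h = 2√2 · r, and the minimum value equals 72·S/r². In particular, for a triangle with area S and inradius r, the height of the isoperimetrically optimal cone over the triangle is 2√2 times the radius of the inscribed circle. -/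
/-- For `S, r > 0`, the function
`h ↦ (S(1 + √(1 + (h/r)²)))³ / (S h / 3)²` on `(0, ∞)` attains its global minimum,
equal to `72 S / r²`, uniquely at `h = 2√2 · r`. -/
theorem stmt_7 (S r : ℝ) (hS : 0 < S) (hr : 0 < r) :
    ∀ h : ℝ, 0 < h →
      72 * S / r ^ 2 ≤
        (S * (1 + Real.sqrt (1 + (h / r) ^ 2))) ^ 3 / (S * h / 3) ^ 2 ∧
      ((S * (1 + Real.sqrt (1 + (h / r) ^ 2))) ^ 3 / (S * h / 3) ^ 2 =
          72 * S / r ^ 2 ↔ h = 2 * Real.sqrt 2 * r) := by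
  intro h hh
  set t := h / r with ht
  have htpos : 0 < t := div_pos hh hr
  set s := Real.sqrt (1 + t ^ 2) with hs
  have hs2 : s ^ 2 = 1 + t ^ 2 := Real.sq_sqrt (by positivity)
  have hsnn : 0 ≤ s := Real.sqrt_nonneg _
  have hs1 : 1 < s := by nlinarith
  have hne : h = t * r := by rw [ht, div_mul_cancel₀ h hr.ne']
  have h2 : h ^ 2 = r ^ 2 * (s ^ 2 - 1) := by rw [hne]; nlinarith
  have hb : (S * h / 3) ^ 2 ≠ 0 := by positivity
  have hr2 : (0:ℝ) < r ^ 2 := by positivity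
  have hdpos : 0 < r ^ 2 * (s - 1) := by nlinarith
  have key : (S * (1 + s)) ^ 3 / (S * h / 3) ^ 2
      = 9 * S * (1 + s) ^ 2 / (r ^ 2 * (s - 1)) := by
    rw [div_eq_div_iff hb hdpos.ne']
    linear_combination (-(S ^ 3 * (1 + s) ^ 2)) * h2
  have hsqrt2 : Real.sqrt 2 ^ 2 = 2 := Real.sq_sqrt (by norm_num)
  constructor
  · rw [key, div_le_div_iff₀ hr2 hdpos]
    nlinarith [mul_nonneg (mul_nonneg hS.le hr2.le) (sq_nonneg (s - 3))]
  · rw [key]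
    constructor
    · intro heq
      rw [div_eq_div_iff hdpos.ne' hr2.ne'] at heq
      have h0 : S * r ^ 2 * (s - 3) ^ 2 = 0 := by linear_combination heq / 9
      have hsq : (s - 3) ^ 2 = 0 := by
        rcases mul_eq_zero.mp h0 with h' | h'
        · exact absurd h' (by positivity)
        · exact h'
      have h3 : s = 3 := by
        have := pow_eq_zero_iff (n := 2) (by norm_num) |>.mp hsq
        linarith
      have ht8 : t ^ 2 = 8 := by nlinarith
      have hteq : t = 2 * Real.sqrt 2 := by
        have h1 : Real.sqrt (t ^ 2) = t := Real.sqrt_sq htpos.le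
        rw [← h1, ht8, show (8:ℝ) = 2 ^ 2 * 2 by norm_num,
          Real.sqrt_mul (by positivity), Real.sqrt_sq (by norm_num)]
      rw [hne, hteq]
    · intro hh2
      have ht' : t = 2 * Real.sqrt 2 := by rw [ht, hh2]; field_simp
      have ht8 : t ^ 2 = 8 := by rw [ht']; nlinarith
      have h3 : s = 3 := by nlinarith
      rw [h3]
      rw [div_eq_div_iff (by positivity) hr2.ne']
      ring
end
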